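/- Let k ≥ 2 be an integer and let c_0, c_1 be reals with 0 < c_0 ≤ 1/(8·e²·k!) and c_1 = 1/(4·k!). Let n, u, m, x be positive integers with k·u ≤ n and m·u ≤ c_0·n^k, and suppose that t := ⌈c_1·x^k⌉ satisfies t ≤ m. Let V be an n-element set, let X ⊆ V with |X| = x, and let M_1, …, M_m be independent k-matchings of size u on V, each chosen uniformly at random; set U_m := M_1 ∪ … ∪ M_m (a family of k-element subsets of V). Then Pr[|U_m ∩ [X]^k| > c_1·x^k] ≤ exp(−c_1·x^k). -/

import Mathlib

/-- The finset of all `k`-matchings of size `u` on the vertex set `V`: families of `u`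
pairwise disjoint `k`-element subsets of `V`. -/
def matchingsOn {α : Type*} [DecidableEq α] (k u : ℕ) (V : Finset α) :
    Finset (Finset (Finset α)) :=
  V.powerset.powerset.filter fun M =>
    M.card = u ∧ (∀ e ∈ M, e.card = k) ∧ ∀ e₁ ∈ M, ∀ e₂ ∈ M, e₁ ≠ e₂ → Disjoint e₁ e₂

namespace Stmt18

open Finset

variable {α β : Type*} [DecidableEq α] [DecidableEq β]

lemma mem_matchingsOn {k u : ℕ} {V : Finset α} {M : Finset (Finset α)} :
    M ∈ matchingsOn k u V ↔ (∀ e ∈ M, e ⊆ V) ∧ M.card = u ∧ (∀ e ∈ M, e.card = k) ∧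
      ∀ e₁ ∈ M, ∀ e₂ ∈ M, e₁ ≠ e₂ → Disjoint e₁ e₂ := by
  simp only [matchingsOn, Finset.mem_filter, Finset.mem_powerset, Finset.subset_iff,
    and_assoc]

lemma matchingsOn_zero (k : ℕ) (V : Finset α) : matchingsOn k 0 V = {∅} := by
  ext M
  simp only [mem_matchingsOn, Finset.mem_singleton, Finset.card_eq_zero]
  constructor
  · rintro ⟨-, h, -⟩; exact h
  · rintro rfl
    simp

lemma matchingsOn_empty {k u : ℕ} (hk : 0 < k) (hu : 0 < u) :
    matchingsOn k u (∅ : Finset α) = ∅ := by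
  rw [Finset.eq_empty_iff_forall_notMem]
  intro M hM
  rw [mem_matchingsOn] at hM
  obtain ⟨h1, h2, h3, -⟩ := hM
  obtain ⟨e, he⟩ := Finset.card_pos.1 (h2 ▸ hu)
  have : e = ∅ := Finset.subset_empty.1 (h1 e he)
  rw [this] at he
  have := h3 ∅ he
  simp at this
  omega

lemma image_injOn_of_subset {V : Finset α} (g : α → β) (hg : Set.InjOn g ↑V)
    {e₁ e₂ : Finset α} (h1 : e₁ ⊆ V) (h2 : e₂ ⊆ V) (h : e₁.image g = e₂.image g) :
    e₁ = e₂ := by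
  ext a
  constructor
  · intro ha
    have : g a ∈ e₂.image g := h ▸ Finset.mem_image_of_mem g ha
    obtain ⟨b, hb, hab⟩ := Finset.mem_image.1 this
    rwa [hg (h2 hb) (h1 ha) hab] at hb
  · intro ha
    have : g a ∈ e₁.image g := h ▸ Finset.mem_image_of_mem g ha
    obtain ⟨b, hb, hab⟩ := Finset.mem_image.1 this
    rwa [hg (h1 hb) (h2 ha) hab] at hb

lemma disjoint_image_of_injOn {V : Finset α} (g : α → β) (hg : Set.InjOn g ↑V)
    {e₁ e₂ : Finset α} (h1 : e₁ ⊆ V) (h2 : e₂ ⊆ V) (h : Disjoint e₁ e₂) :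
    Disjoint (e₁.image g) (e₂.image g) := by
  rw [Finset.disjoint_left]
  intro b hb1 hb2
  obtain ⟨a1, ha1, rfl⟩ := Finset.mem_image.1 hb1
  obtain ⟨a2, ha2, hab⟩ := Finset.mem_image.1 hb2
  rw [hg (h2 ha2) (h1 ha1) hab] at ha2
  exact Finset.disjoint_left.1 h ha1 ha2

lemma matchingsOn_image_mem {k u : ℕ} {V : Finset α} (g : α → β) (hg : Set.InjOn g ↑V)
    {M : Finset (Finset α)} (hM : M ∈ matchingsOn k u V) :
    M.image (fun e => e.image g) ∈ matchingsOn k u (V.image g) := by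
  rw [mem_matchingsOn] at hM ⊢
  obtain ⟨hsub, hcard, hk, hdisj⟩ := hM
  refine ⟨?_, ?_, ?_, ?_⟩
  · intro e' he'
    obtain ⟨e, he, rfl⟩ := Finset.mem_image.1 he'
    exact Finset.image_subset_image (hsub e he)
  · rw [Finset.card_image_of_injOn, hcard]
    intro e₁ h1 e₂ h2 h
    exact image_injOn_of_subset g hg (hsub e₁ h1) (hsub e₂ h2) h
  · intro e' he'
    obtain ⟨e, he, rfl⟩ := Finset.mem_image.1 he'
    rw [Finset.card_image_of_injOn (hg.mono (by exact_mod_cast hsub e he))]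
    exact hk e he
  · intro e₁' h1' e₂' h2' hne
    obtain ⟨e₁, h1, rfl⟩ := Finset.mem_image.1 h1'
    obtain ⟨e₂, h2, rfl⟩ := Finset.mem_image.1 h2'
    have hne' : e₁ ≠ e₂ := fun h => hne (by rw [h])
    exact disjoint_image_of_injOn g hg (hsub e₁ h1) (hsub e₂ h2) (hdisj e₁ h1 e₂ h2 hne')

lemma card_matchingsOn_image {k : ℕ} (hk : 0 < k) (u : ℕ) (V : Finset α) (g : α → β)
    (hg : Set.InjOn g ↑V) :
    (matchingsOn k u (V.image g)).card = (matchingsOn k u V).card := by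
  rcases isEmpty_or_nonempty α with hα | hα
  · have : V = ∅ := Finset.eq_empty_of_isEmpty V
    subst this
    rw [Finset.image_empty]
    rcases Nat.eq_zero_or_pos u with hu | hu
    · subst hu; rw [matchingsOn_zero, matchingsOn_zero, Finset.card_singleton, Finset.card_singleton]
    · rw [matchingsOn_empty hk hu, matchingsOn_empty hk hu, Finset.card_empty, Finset.card_empty]
  classical
  set g' : β → α := Function.invFunOn g ↑V with hg'
  have hgg' : ∀ a ∈ V, g' (g a) = a := fun a ha =>
    hg.leftInvOn_invFunOn ha
  have hg'W : ∀ b ∈ V.image g, g' b ∈ V ∧ g (g' b) = b := by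
    intro b hb
    obtain ⟨a, ha, rfl⟩ := Finset.mem_image.1 hb
    rw [hgg' a ha]
    exact ⟨ha, rfl⟩
  have hg'inj : Set.InjOn g' ↑(V.image g) := by
    intro b₁ hb₁ b₂ hb₂ h
    have e1 := (hg'W b₁ (by exact_mod_cast hb₁)).2
    have e2 := (hg'W b₂ (by exact_mod_cast hb₂)).2
    rw [← e1, ← e2, h]
  have himg : (V.image g).image g' = V := by
    apply Finset.Subset.antisymm
    · intro a ha
      obtain ⟨b, hb, rfl⟩ := Finset.mem_image.1 ha
      exact (hg'W b hb).1
    · intro a ha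
      exact Finset.mem_image.2 ⟨g a, Finset.mem_image_of_mem g ha, hgg' a ha⟩
  have key : ∀ (e : Finset α), e ⊆ V → (e.image g).image g' = e := by
    intro e he
    ext a
    simp only [Finset.mem_image]
    constructor
    · rintro ⟨b, ⟨c, hc, rfl⟩, rfl⟩
      rwa [hgg' c (he hc)]
    · intro ha
      exact ⟨g a, ⟨a, ha, rfl⟩, hgg' a (he ha)⟩
  have key' : ∀ (e' : Finset β), e' ⊆ V.image g → (e'.image g').image g = e' := by
    intro e' he'
    ext b
    simp only [Finset.mem_image]
    constructor
    · rintro ⟨a, ⟨c, hc, rfl⟩, rfl⟩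
      rw [(hg'W c (he' hc)).2]
      exact hc
    · intro hb
      exact ⟨g' b, ⟨b, hb, rfl⟩, (hg'W b (he' hb)).2⟩
  refine Finset.card_nbij' (fun M' => M'.image (fun e' => e'.image g'))
    (fun M => M.image (fun e => e.image g)) ?_ ?_ ?_ ?_
  · intro M' hM'
    have := matchingsOn_image_mem (V := V.image g) g' hg'inj hM'
    rwa [himg] at this
  · intro M hM
    exact matchingsOn_image_mem g hg hM
  · intro M' hM'
    rw [Finset.mem_coe, mem_matchingsOn] at hM'
    obtain ⟨hsub, -, -, -⟩ := hM'
    show (M'.image fun e' => e'.image g').image (fun e => e.image g) = M'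
    rw [Finset.image_image]
    calc M'.image ((fun e => e.image g) ∘ fun e' => e'.image g')
        = M'.image id := Finset.image_congr fun e' he' => key' e' (hsub e' he')
      _ = M' := Finset.image_id
  · intro M hM
    rw [Finset.mem_coe, mem_matchingsOn] at hM
    obtain ⟨hsub, -, -, -⟩ := hM
    show (M.image fun e => e.image g).image (fun e' => e'.image g') = M
    rw [Finset.image_image]
    calc M.image ((fun e' => e'.image g') ∘ fun e => e.image g)
        = M.image id := Finset.image_congr fun e he => key e (hsub e he)
      _ = M := Finset.image_id

lemma card_matchingsOn_congr {k u : ℕ} (hk : 0 < k) {V : Finset α} {W : Finset β}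
    (h : V.card = W.card) :
    (matchingsOn k u V).card = (matchingsOn k u W).card := by
  rcases V.eq_empty_or_nonempty with rfl | hV
  · have hW : W = ∅ := by
      rw [← Finset.card_eq_zero, ← h, Finset.card_empty]
    subst hW
    rcases Nat.eq_zero_or_pos u with rfl | hu
    · rw [matchingsOn_zero, matchingsOn_zero]; simp
    · rw [matchingsOn_empty hk hu, matchingsOn_empty hk hu]; simp
  · have hWne : W.Nonempty := by
      rw [← Finset.card_pos, ← h, Finset.card_pos]; exact hV
    haveI : Nonempty β := ⟨hWne.choose⟩
    set e := Finset.equivOfCardEq h with he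
    set g : α → β := fun a => if ha : a ∈ V then (e ⟨a, ha⟩ : β) else Classical.arbitrary β
      with hgdef
    have hgV : ∀ a (ha : a ∈ V), g a = (e ⟨a, ha⟩ : β) := by
      intro a ha; simp only [hgdef, dif_pos ha]
    have hginj : Set.InjOn g ↑V := by
      intro a₁ h₁ a₂ h₂ hg
      rw [Finset.mem_coe] at h₁ h₂
      rw [hgV a₁ h₁, hgV a₂ h₂] at hg
      have := e.injective (Subtype.coe_injective hg)
      exact congrArg Subtype.val this
    have himg : V.image g = W := by
      apply Finset.eq_of_subset_of_card_le
      · intro b hb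
        obtain ⟨a, ha, rfl⟩ := Finset.mem_image.1 hb
        rw [hgV a ha]
        exact (e ⟨a, ha⟩).2
      · rw [Finset.card_image_of_injOn hginj, h]
    rw [← himg, card_matchingsOn_image hk u V g hginj]

lemma card_filter_superset {k u : ℕ} (hk : 0 < k) {V : Finset α} {A : Finset (Finset α)}
    (hA : A ∈ matchingsOn k A.card V) (hj : A.card ≤ u) :
    ((matchingsOn k u V).filter fun M => A ⊆ M).card
      = (matchingsOn k (u - A.card) (V \ A.biUnion id)).card := by
  rw [mem_matchingsOn] at hA
  obtain ⟨hAsub, -, hAk, hAdisj⟩ := hA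
  have hsubY : ∀ e ∈ A, e ⊆ A.biUnion id := by
    intro e he a ha
    exact Finset.mem_biUnion.2 ⟨e, he, ha⟩
  refine Finset.card_nbij' (fun M => M \ A) (fun M'' => M'' ∪ A) ?_ ?_ ?_ ?_
  · intro M hM
    rw [Finset.mem_coe, Finset.mem_filter] at hM
    obtain ⟨hM, hAM⟩ := hM
    rw [mem_matchingsOn] at hM
    obtain ⟨hsub, hcard, hke, hdisj⟩ := hM
    rw [Finset.mem_coe, mem_matchingsOn]
    refine ⟨?_, ?_, ?_, ?_⟩
    · intro e he
      rw [Finset.mem_sdiff] at he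
      obtain ⟨heM, heA⟩ := he
      intro a ha
      rw [Finset.mem_sdiff]
      refine ⟨hsub e heM ha, ?_⟩
      intro haY
      obtain ⟨e', he', ha'⟩ := Finset.mem_biUnion.1 haY
      have hne : e ≠ e' := fun h => heA (h ▸ he')
      exact Finset.disjoint_left.1 (hdisj e heM e' (hAM he') hne) ha ha'
    · rw [Finset.card_sdiff_of_subset hAM, hcard]
    · intro e he
      exact hke e (Finset.mem_sdiff.1 he).1
    · intro e₁ h₁ e₂ h₂ hne
      exact hdisj e₁ (Finset.mem_sdiff.1 h₁).1 e₂ (Finset.mem_sdiff.1 h₂).1 hne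
  · intro M'' hM''
    rw [Finset.mem_coe, mem_matchingsOn] at hM''
    obtain ⟨hsub, hcard, hke, hdisj⟩ := hM''
    have hdisjMA : Disjoint M'' A := by
      rw [Finset.disjoint_left]
      intro e heM heA
      have h1 : e ⊆ V \ A.biUnion id := hsub e heM
      have h2 : e ⊆ A.biUnion id := hsubY e heA
      have he0 : e = ∅ := by
        rw [← Finset.subset_empty]
        intro a ha
        exact absurd (h2 ha) (Finset.mem_sdiff.1 (h1 ha)).2
      have := hAk e heA
      rw [he0, Finset.card_empty] at this
      omega
    rw [Finset.mem_coe, Finset.mem_filter]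
    refine ⟨?_, Finset.subset_union_right⟩
    rw [mem_matchingsOn]
    refine ⟨?_, ?_, ?_, ?_⟩
    · intro e he
      rcases Finset.mem_union.1 he with h | h
      · exact (hsub e h).trans Finset.sdiff_subset
      · exact hAsub e h
    · rw [Finset.card_union_of_disjoint hdisjMA, hcard]
      omega
    · intro e he
      rcases Finset.mem_union.1 he with h | h
      · exact hke e h
      · exact hAk e h
    · intro e₁ h₁ e₂ h₂ hne
      have cross : ∀ e₁' ∈ M'', ∀ e₂' ∈ A, Disjoint e₁' e₂' := by
        intro e₁' h₁' e₂' h₂'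
        refine Finset.disjoint_left.2 fun a ha ha' => ?_
        exact (Finset.mem_sdiff.1 (hsub e₁' h₁' ha)).2 (hsubY e₂' h₂' ha')
      rcases Finset.mem_union.1 h₁ with hm₁ | hm₁ <;> rcases Finset.mem_union.1 h₂ with hm₂ | hm₂
      · exact hdisj e₁ hm₁ e₂ hm₂ hne
      · exact cross e₁ hm₁ e₂ hm₂
      · exact (cross e₂ hm₂ e₁ hm₁).symm
      · exact hAdisj e₁ hm₁ e₂ hm₂ hne
  · intro M hM
    rw [Finset.mem_coe, Finset.mem_filter] at hM
    exact Finset.sdiff_union_of_subset hM.2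
  · intro M'' hM''
    rw [Finset.mem_coe, mem_matchingsOn] at hM''
    obtain ⟨hsub, -, hke, -⟩ := hM''
    apply Finset.union_sdiff_cancel_right
    rw [Finset.disjoint_left]
    intro e heM heA
    have h1 : e ⊆ V \ A.biUnion id := hsub e heM
    have h2 : e ⊆ A.biUnion id := hsubY e heA
    have he0 : e = ∅ := by
      rw [← Finset.subset_empty]
      intro a ha
      exact absurd (h2 ha) (Finset.mem_sdiff.1 (h1 ha)).2
    have := hAk e heA
    rw [he0, Finset.card_empty] at this
    omega

/-- canonical number of `k`-matchings of size `u` on `n` vertices -/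
def Ncard (k u n : ℕ) : ℕ := (matchingsOn k u (Finset.range n)).card

lemma Ncard_succ_rec {k u n : ℕ} (hk : 0 < k) (hu : 0 < u) :
    Ncard k u n * u = n.choose k * Ncard k (u - 1) (n - k) := by
  classical
  set V := Finset.range n with hVdef
  have hVcard : V.card = n := Finset.card_range n
  set P := V.powersetCard k with hPdef
  have h1 : (matchingsOn k u V).card * u = ∑ M ∈ matchingsOn k u V, M.card := by
    rw [Finset.sum_congr rfl (fun M hM => (mem_matchingsOn.1 hM).2.1), Finset.sum_const,
      smul_eq_mul]
  have hMP : ∀ M ∈ matchingsOn k u V, M ⊆ P := by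
    intro M hM e he
    obtain ⟨hsub, -, hke, -⟩ := mem_matchingsOn.1 hM
    exact Finset.mem_powersetCard.2 ⟨hsub e he, hke e he⟩
  have h2 : ∑ M ∈ matchingsOn k u V, M.card
      = ∑ e ∈ P, ((matchingsOn k u V).filter fun M => e ∈ M).card := by
    have step : ∀ M ∈ matchingsOn k u V, M.card = ∑ e ∈ P, if e ∈ M then 1 else 0 := by
      intro M hM
      rw [← Finset.card_filter, Finset.filter_mem_eq_inter,
        Finset.inter_eq_right.2 (hMP M hM)]
    rw [Finset.sum_congr rfl step, Finset.sum_comm]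
    exact Finset.sum_congr rfl fun e _ => (Finset.card_filter _ _).symm
  have h3 : ∀ e ∈ P, ((matchingsOn k u V).filter fun M => e ∈ M).card
      = Ncard k (u - 1) (n - k) := by
    intro e he
    obtain ⟨heV, hek⟩ := Finset.mem_powersetCard.1 he
    have hA : ({e} : Finset (Finset ℕ)) ∈ matchingsOn k ({e} : Finset (Finset ℕ)).card V := by
      rw [Finset.card_singleton, mem_matchingsOn]
      refine ⟨fun e' he' => ?_, Finset.card_singleton e, fun e' he' => ?_,
        fun e₁ h₁ e₂ h₂ hne => ?_⟩
      · rw [Finset.mem_singleton] at he'; subst he'; exact heV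
      · rw [Finset.mem_singleton] at he'; subst he'; exact hek
      · rw [Finset.mem_singleton] at h₁ h₂; subst h₁; subst h₂; exact absurd rfl hne
    have hfe : ((matchingsOn k u V).filter fun M => e ∈ M)
        = (matchingsOn k u V).filter fun M => ({e} : Finset (Finset ℕ)) ⊆ M := by
      apply Finset.filter_congr
      intro M _
      exact Finset.singleton_subset_iff.symm
    have hcs := card_filter_superset (u := u) hk hA (by rw [Finset.card_singleton]; omega)
    rw [hfe, hcs, Finset.card_singleton, Finset.singleton_biUnion]
    apply card_matchingsOn_congr hk
    rw [id_eq, Finset.card_sdiff_of_subset heV, hVcard, hek, Finset.card_range]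
  rw [Ncard, h1, h2, Finset.sum_congr rfl h3, Finset.sum_const, smul_eq_mul, hPdef,
    Finset.card_powersetCard, hVcard]

lemma card_biUnion_matching {k : ℕ} {A : Finset (Finset α)}
    (hAk : ∀ e ∈ A, e.card = k)
    (hAdisj : ∀ e₁ ∈ A, ∀ e₂ ∈ A, e₁ ≠ e₂ → Disjoint e₁ e₂) :
    (A.biUnion id).card = A.card * k := by
  have hid : A.biUnion id = A.biUnion (fun x => x) := rfl
  rw [hid, Finset.card_biUnion hAdisj]
  rw [Finset.sum_congr rfl fun e he => hAk e he, Finset.sum_const, smul_eq_mul]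

lemma card_filter_superset_eq_Ncard {k u : ℕ} (hk : 0 < k) {V : Finset α}
    {A : Finset (Finset α)} (hA : A ∈ matchingsOn k A.card V) (hj : A.card ≤ u) :
    ((matchingsOn k u V).filter fun M => A ⊆ M).card
      = Ncard k (u - A.card) (V.card - A.card * k) := by
  rw [card_filter_superset hk hA hj]
  apply card_matchingsOn_congr hk
  obtain ⟨hAsub, -, hAk, hAdisj⟩ := mem_matchingsOn.1 hA
  have hYV : A.biUnion id ⊆ V := by
    intro a ha
    obtain ⟨e, he, hae⟩ := Finset.mem_biUnion.1 ha
    exact hAsub e he hae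
  rw [Finset.card_sdiff_of_subset hYV, Finset.card_range, card_biUnion_matching hAk hAdisj]

lemma key_nat {x n k u : ℕ} (c : ℕ) (hxn : x ≤ n) (hju : ∀ j:ℕ, True) : True := trivial

lemma key_nat' {x n k u j : ℕ} (c : ℕ) (hxn : x ≤ n) (hju : j ≤ u) :
    (x - c).choose k * ((u - j) * n ^ k) ≤ (n - c).choose k * (u * x ^ k) := by
  have hdesc : (x - c).descFactorial k * n ^ k ≤ (n - c).descFactorial k * x ^ k := by
    rw [Nat.descFactorial_eq_prod_range, Nat.descFactorial_eq_prod_range]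
    have hxpow : x ^ k = ∏ _i ∈ Finset.range k, x := by
      rw [Finset.prod_const, Finset.card_range]
    have hnpow : n ^ k = ∏ _i ∈ Finset.range k, n := by
      rw [Finset.prod_const, Finset.card_range]
    rw [hxpow, hnpow, ← Finset.prod_mul_distrib, ← Finset.prod_mul_distrib]
    apply Finset.prod_le_prod'
    intro i _
    rw [Nat.sub_sub, Nat.sub_sub, Nat.sub_mul, Nat.sub_mul, mul_comm x n]
    exact Nat.sub_le_sub_left (Nat.mul_le_mul_left (c + i) hxn) (n * x)
  refine Nat.le_of_mul_le_mul_left ?_ k.factorial_pos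
  calc k.factorial * ((x - c).choose k * ((u - j) * n ^ k))
      = (u - j) * ((x - c).descFactorial k * n ^ k) := by
        rw [Nat.descFactorial_eq_factorial_mul_choose]; ring
    _ ≤ u * ((n - c).descFactorial k * x ^ k) :=
        Nat.mul_le_mul (Nat.sub_le u j) hdesc
    _ = k.factorial * ((n - c).choose k * (u * x ^ k)) := by
        rw [Nat.descFactorial_eq_factorial_mul_choose]; ring

/-- number of matchings containing a given family -/
def Cnt (k u : ℕ) (V : Finset α) (B : Finset (Finset α)) : ℕ :=
  ((matchingsOn k u V).filter fun M => B ⊆ M).card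

lemma Cnt_eq_zero {k u : ℕ} {V : Finset α} {B : Finset (Finset α)}
    (h : ∀ M ∈ matchingsOn k u V, ¬ B ⊆ M) : Cnt k u V B = 0 := by
  rw [Cnt, Finset.card_eq_zero, Finset.filter_eq_empty_iff]
  exact h

lemma step_bound {k u : ℕ} (hk : 0 < k) {V X : Finset α} (hXV : X ⊆ V)
    (hn : 0 < V.card) (hku : k * u ≤ V.card)
    {j : ℕ} {A : Finset (Finset α)} (hA : A ∈ (X.powersetCard k).powersetCard j) :
    ∑ e ∈ X.powersetCard k \ A, (Cnt k u V (insert e A) : ℝ)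
      ≤ (Cnt k u V A : ℝ)
        * ((u : ℝ) * (X.card : ℝ) ^ k / (V.card : ℝ) ^ k) := by
  obtain ⟨hAT, hAcard⟩ := Finset.mem_powersetCard.1 hA
  have hedge : ∀ e ∈ A, e ⊆ X ∧ e.card = k := by
    intro e he
    exact Finset.mem_powersetCard.1 (hAT he)
  have hrhs_nonneg : (0:ℝ) ≤ (Cnt k u V A : ℝ)
      * ((u : ℝ) * (X.card : ℝ) ^ k / (V.card : ℝ) ^ k) := by positivity
  by_cases hdisj : ∀ e₁ ∈ A, ∀ e₂ ∈ A, e₁ ≠ e₂ → Disjoint e₁ e₂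
  swap
  · -- non-disjoint family: all counts are zero
    have hzero : ∀ e ∈ X.powersetCard k \ A, (Cnt k u V (insert e A) : ℝ) = 0 := by
      intro e _
      rw [Nat.cast_eq_zero]
      apply Cnt_eq_zero
      intro M hM hBM
      obtain ⟨-, -, -, hMdisj⟩ := mem_matchingsOn.1 hM
      apply hdisj
      intro e₁ h₁ e₂ h₂ hne
      exact hMdisj e₁ (hBM (Finset.mem_insert_of_mem h₁)) e₂
        (hBM (Finset.mem_insert_of_mem h₂)) hne
    rw [Finset.sum_congr rfl hzero, Finset.sum_const, smul_zero]
    exact hrhs_nonneg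
  by_cases hju : u ≤ j
  · -- family too large: all counts zero
    have hzero : ∀ e ∈ X.powersetCard k \ A, (Cnt k u V (insert e A) : ℝ) = 0 := by
      intro e he
      obtain ⟨heT, heA⟩ := Finset.mem_sdiff.1 he
      rw [Nat.cast_eq_zero]
      apply Cnt_eq_zero
      intro M hM hBM
      obtain ⟨-, hMcard, -, -⟩ := mem_matchingsOn.1 hM
      have := Finset.card_le_card hBM
      rw [Finset.card_insert_of_notMem heA, hAcard, hMcard] at this
      omega
    rw [Finset.sum_congr rfl hzero, Finset.sum_const, smul_zero]
    exact hrhs_nonneg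
  push_neg at hju
  -- main case
  set Y : Finset α := A.biUnion id with hYdef
  have hYX : Y ⊆ X := by
    intro a ha
    obtain ⟨e, he, hae⟩ := Finset.mem_biUnion.1 ha
    exact (hedge e he).1 hae
  have hAk : ∀ e ∈ A, e.card = k := fun e he => (hedge e he).2
  have hYcard : Y.card = j * k := by
    rw [hYdef, card_biUnion_matching hAk hdisj, hAcard]
  have hAmem : A ∈ matchingsOn k A.card V := by
    rw [mem_matchingsOn]
    exact ⟨fun e he => ((hedge e he).1).trans hXV, rfl, hAk, hdisj⟩
  have hCA : Cnt k u V A = Ncard k (u - j) (V.card - j * k) := by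
    rw [Cnt, card_filter_superset_eq_Ncard hk hAmem (by omega), hAcard]
  -- restrict the sum to edges avoiding Y
  have hSsub : (X \ Y).powersetCard k ⊆ X.powersetCard k \ A := by
    intro e he
    obtain ⟨heXY, hek⟩ := Finset.mem_powersetCard.1 he
    rw [Finset.mem_sdiff]
    refine ⟨Finset.mem_powersetCard.2 ⟨heXY.trans Finset.sdiff_subset, hek⟩, ?_⟩
    intro heA
    have h1 : e ⊆ Y := by
      intro a ha
      exact Finset.mem_biUnion.2 ⟨e, heA, ha⟩
    obtain ⟨a, ha⟩ := Finset.card_pos.1 (hek ▸ hk)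
    exact (Finset.mem_sdiff.1 (heXY ha)).2 (h1 ha)
  have hSzero : ∀ e ∈ X.powersetCard k \ A, e ∉ (X \ Y).powersetCard k →
      (Cnt k u V (insert e A) : ℝ) = 0 := by
    intro e he hnot
    obtain ⟨heT, heA⟩ := Finset.mem_sdiff.1 he
    obtain ⟨heX, hek⟩ := Finset.mem_powersetCard.1 heT
    rw [Nat.cast_eq_zero]
    have : ¬ e ⊆ X \ Y := fun hsub => hnot (Finset.mem_powersetCard.2 ⟨hsub, hek⟩)
    have hmeet : ∃ a ∈ e, a ∈ Y := by
      by_contra hno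
      push_neg at hno
      exact this fun a ha => Finset.mem_sdiff.2 ⟨heX ha, hno a ha⟩
    obtain ⟨a, hae, haY⟩ := hmeet
    obtain ⟨e', he', hae'⟩ := Finset.mem_biUnion.1 haY
    have hne : e ≠ e' := fun h => heA (h ▸ he')
    apply Cnt_eq_zero
    intro M hM hBM
    obtain ⟨-, -, -, hMdisj⟩ := mem_matchingsOn.1 hM
    have := hMdisj e (hBM (Finset.mem_insert_self e A)) e'
      (hBM (Finset.mem_insert_of_mem he')) hne
    exact Finset.disjoint_left.1 this hae hae'
  rw [← Finset.sum_subset hSsub hSzero]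
  -- evaluate terms
  have hterm : ∀ e ∈ (X \ Y).powersetCard k,
      (Cnt k u V (insert e A) : ℝ) = (Ncard k (u - (j+1)) (V.card - (j+1) * k) : ℝ) := by
    intro e he
    obtain ⟨heXY, hek⟩ := Finset.mem_powersetCard.1 he
    have heA : e ∉ A := by
      intro heA
      have h1 : e ⊆ Y := fun a ha => Finset.mem_biUnion.2 ⟨e, heA, ha⟩
      obtain ⟨a, ha⟩ := Finset.card_pos.1 (hek ▸ hk)
      exact (Finset.mem_sdiff.1 (heXY ha)).2 (h1 ha)
    have hcardins : (insert e A).card = j + 1 := by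
      rw [Finset.card_insert_of_notMem heA, hAcard]
    have hmem : insert e A ∈ matchingsOn k (insert e A).card V := by
      rw [mem_matchingsOn]
      refine ⟨?_, rfl, ?_, ?_⟩
      · intro e' he'
        rcases Finset.mem_insert.1 he' with rfl | h
        · exact (heXY.trans Finset.sdiff_subset).trans hXV
        · exact ((hedge e' h).1).trans hXV
      · intro e' he'
        rcases Finset.mem_insert.1 he' with rfl | h
        · exact hek
        · exact hAk e' h
      · have hcross : ∀ e' ∈ A, Disjoint e e' := by
          intro e' he'
          refine Finset.disjoint_left.2 fun a ha ha' => ?_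
          exact (Finset.mem_sdiff.1 (heXY ha)).2 (Finset.mem_biUnion.2 ⟨e', he', ha'⟩)
        intro e₁ h₁ e₂ h₂ hne
        rcases Finset.mem_insert.1 h₁ with rfl | hm₁ <;>
          rcases Finset.mem_insert.1 h₂ with rfl | hm₂
        · exact absurd rfl hne
        · exact hcross e₂ hm₂
        · exact (hcross e₁ hm₁).symm
        · exact hdisj e₁ hm₁ e₂ hm₂ hne
    rw [Cnt, card_filter_superset_eq_Ncard hk hmem (by omega), hcardins]
  rw [Finset.sum_congr rfl hterm, Finset.sum_const, Finset.card_powersetCard,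
    nsmul_eq_mul]
  have hXYcard : (X \ Y).card = X.card - j * k := by
    rw [Finset.card_sdiff_of_subset hYX, hYcard]
  rw [hXYcard, hCA]
  -- now a purely numeric inequality
  set nn := V.card
  set xx := X.card
  have hxn : xx ≤ nn := Finset.card_le_card hXV
  have hjk1 : (j + 1) * k ≤ nn := by
    calc (j + 1) * k ≤ u * k := by
          apply Nat.mul_le_mul_right; omega
      _ = k * u := Nat.mul_comm u k
      _ ≤ nn := hku
  have hrec : Ncard k (u - j) (nn - j * k) * (u - j)
      = (nn - j * k).choose k * Ncard k (u - j - 1) (nn - j * k - k) := by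
    have := Ncard_succ_rec (k := k) (u := u - j) (n := nn - j * k) hk (by omega)
    exact this
  have heq1 : u - j - 1 = u - (j + 1) := by omega
  have heq2 : nn - j * k - k = nn - (j + 1) * k := by
    rw [Nat.succ_mul]; omega
  rw [heq1, heq2] at hrec
  have hkey := key_nat' (x := xx) (n := nn) (k := k) (u := u) (j := j) (j * k) hxn
    (by omega)
  have hjk' : j * k + k ≤ nn := by
    rw [← Nat.succ_mul]; exact hjk1
  have hcn_pos : 0 < (nn - j * k).choose k := by
    apply Nat.choose_pos
    omega
  have hnpos : (0:ℝ) < (nn : ℝ) ^ k := by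
    have : (0:ℝ) < (nn : ℝ) := by exact_mod_cast hn
    positivity
  have hNat : (xx - j * k).choose k * Ncard k (u - (j + 1)) (nn - (j + 1) * k) * nn ^ k
      ≤ Ncard k (u - j) (nn - j * k) * (u * xx ^ k) := by
    refine Nat.le_of_mul_le_mul_right ?_ hcn_pos
    calc (xx - j * k).choose k * Ncard k (u - (j + 1)) (nn - (j + 1) * k) * nn ^ k
          * (nn - j * k).choose k
        = (xx - j * k).choose k * nn ^ k
            * (Ncard k (u - j) (nn - j * k) * (u - j)) := by rw [hrec]; ring
      _ = Ncard k (u - j) (nn - j * k) * ((xx - j * k).choose k * ((u - j) * nn ^ k)) := by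
          ring
      _ ≤ Ncard k (u - j) (nn - j * k) * ((nn - j * k).choose k * (u * xx ^ k)) :=
          Nat.mul_le_mul_left _ hkey
      _ = Ncard k (u - j) (nn - j * k) * (u * xx ^ k) * (nn - j * k).choose k := by ring
  rw [← mul_div_assoc, le_div_iff₀ hnpos]
  exact_mod_cast hNat

lemma double_count {T : Finset (Finset α)} {j : ℕ} (f : Finset (Finset α) → ℝ) :
    ∑ B ∈ T.powersetCard (j + 1), (j + 1 : ℝ) * f B
      = ∑ A ∈ T.powersetCard j, ∑ e ∈ T \ A, f (insert e A) := by
  have lhs : ∑ B ∈ T.powersetCard (j + 1), (j + 1 : ℝ) * f B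
      = ∑ B ∈ T.powersetCard (j + 1), ∑ e ∈ B, f B := by
    refine Finset.sum_congr rfl fun B hB => ?_
    rw [Finset.sum_const, nsmul_eq_mul, (Finset.mem_powersetCard.1 hB).2]
    push_cast
    ring
  rw [lhs, Finset.sum_sigma' (T.powersetCard (j+1)) (fun B => B) (fun B _e => f B),
    Finset.sum_sigma' (T.powersetCard j) (fun A => T \ A) (fun A e => f (insert e A))]
  refine Finset.sum_nbij' (fun p => ⟨p.1.erase p.2, p.2⟩) (fun p => ⟨insert p.2 p.1, p.2⟩)
    ?_ ?_ ?_ ?_ ?_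
  · rintro ⟨B, e⟩ hp
    rw [Finset.mem_sigma] at hp ⊢
    obtain ⟨hB, he⟩ := hp
    obtain ⟨hBT, hBcard⟩ := Finset.mem_powersetCard.1 hB
    refine ⟨Finset.mem_powersetCard.2 ⟨(Finset.erase_subset _ _).trans hBT, ?_⟩, ?_⟩
    · rw [Finset.card_erase_of_mem he, hBcard]; omega
    · rw [Finset.mem_sdiff]
      exact ⟨hBT he, Finset.notMem_erase e B⟩
  · rintro ⟨A, e⟩ hp
    rw [Finset.mem_sigma] at hp ⊢
    obtain ⟨hA, he⟩ := hp
    obtain ⟨hAT, hAcard⟩ := Finset.mem_powersetCard.1 hA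
    obtain ⟨heT, heA⟩ := Finset.mem_sdiff.1 he
    refine ⟨Finset.mem_powersetCard.2 ⟨?_, ?_⟩, Finset.mem_insert_self e A⟩
    · intro a ha
      rcases Finset.mem_insert.1 ha with rfl | h
      · exact heT
      · exact hAT h
    · rw [Finset.card_insert_of_notMem heA, hAcard]
  · rintro ⟨B, e⟩ hp
    rw [Finset.mem_sigma] at hp
    simp only [Sigma.mk.inj_iff, heq_eq_eq]
    exact ⟨Finset.insert_erase hp.2, trivial⟩
  · rintro ⟨A, e⟩ hp
    rw [Finset.mem_sigma] at hp
    obtain ⟨-, he⟩ := hp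
    obtain ⟨-, heA⟩ := Finset.mem_sdiff.1 he
    simp only [Sigma.mk.inj_iff, heq_eq_eq]
    exact ⟨Finset.erase_insert heA, trivial⟩
  · rintro ⟨B, e⟩ hp
    rw [Finset.mem_sigma] at hp
    simp only
    rw [Finset.insert_erase hp.2]

lemma sum_Cnt_bound {k u : ℕ} (hk : 0 < k) {V X : Finset α} (hXV : X ⊆ V)
    (hn : 0 < V.card) (hku : k * u ≤ V.card) (j : ℕ) :
    (∑ A ∈ (X.powersetCard k).powersetCard j, (Cnt k u V A : ℝ)) * (j.factorial : ℝ)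
      ≤ ((matchingsOn k u V).card : ℝ)
        * ((u : ℝ) * (X.card : ℝ) ^ k / (V.card : ℝ) ^ k) ^ j := by
  set q : ℝ := (u : ℝ) * (X.card : ℝ) ^ k / (V.card : ℝ) ^ k with hqdef
  have hq : 0 ≤ q := by positivity
  induction j with
  | zero =>
    rw [Finset.powersetCard_zero, Finset.sum_singleton, pow_zero, mul_one,
      Nat.factorial_zero, Nat.cast_one, mul_one]
    have : Cnt k u V ∅ = (matchingsOn k u V).card := by
      rw [Cnt, Finset.filter_true_of_mem fun M _ => Finset.empty_subset M]
    rw [this]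
  | succ j ih =>
    have hstep : ∑ B ∈ (X.powersetCard k).powersetCard (j+1), ((j:ℝ) + 1) * (Cnt k u V B : ℝ)
        ≤ (∑ A ∈ (X.powersetCard k).powersetCard j, (Cnt k u V A : ℝ)) * q := by
      have := double_count (T := X.powersetCard k) (j := j) (fun B => (Cnt k u V B : ℝ))
      push_cast at this
      rw [this, Finset.sum_mul]
      exact Finset.sum_le_sum fun A hA => step_bound hk hXV hn hku hA
    have hfact : ((j+1).factorial : ℝ) = ((j:ℝ) + 1) * (j.factorial : ℝ) := by
      rw [Nat.factorial_succ]
      push_cast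
      ring
    calc (∑ B ∈ (X.powersetCard k).powersetCard (j+1), (Cnt k u V B : ℝ))
          * ((j+1).factorial : ℝ)
        = (∑ B ∈ (X.powersetCard k).powersetCard (j+1), ((j:ℝ)+1) * (Cnt k u V B : ℝ))
            * (j.factorial : ℝ) := by
          rw [hfact, ← Finset.mul_sum]
          ring
      _ ≤ ((∑ A ∈ (X.powersetCard k).powersetCard j, (Cnt k u V A : ℝ)) * q)
            * (j.factorial : ℝ) := by
          apply mul_le_mul_of_nonneg_right hstep
          positivity
      _ = ((∑ A ∈ (X.powersetCard k).powersetCard j, (Cnt k u V A : ℝ))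
            * (j.factorial : ℝ)) * q := by ring
      _ ≤ (((matchingsOn k u V).card : ℝ) * q ^ j) * q :=
          mul_le_mul_of_nonneg_right ih hq
      _ = ((matchingsOn k u V).card : ℝ) * q ^ (j+1) := by
          rw [pow_succ]; ring

lemma mgf_bound {k u : ℕ} (hk : 0 < k) {V X : Finset α} (hXV : X ⊆ V)
    (hn : 0 < V.card) (hku : k * u ≤ V.card) {z : ℝ} (hz : 1 ≤ z) :
    ∑ M ∈ matchingsOn k u V, z ^ ((M.filter fun S => S ⊆ X).card)
      ≤ ((matchingsOn k u V).card : ℝ)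
        * Real.exp ((z - 1) * ((u : ℝ) * (X.card : ℝ) ^ k / (V.card : ℝ) ^ k)) := by
  set T := X.powersetCard k with hTdef
  have hw : (0:ℝ) ≤ z - 1 := by linarith
  -- expand each power as a sum over subfamilies
  have hexp : ∀ M ∈ matchingsOn k u V,
      z ^ ((M.filter fun S => S ⊆ X).card)
        = ∑ A ∈ T.powerset, (if A ⊆ M then (z - 1) ^ A.card else 0) := by
    intro M hM
    obtain ⟨-, -, hke, -⟩ := mem_matchingsOn.1 hM
    have hps : (M.filter fun S => S ⊆ X).powerset = T.powerset.filter fun A => A ⊆ M := by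
      ext A
      simp only [Finset.mem_powerset, Finset.mem_filter]
      constructor
      · intro h
        have hAM : A ⊆ M := fun e he => (Finset.mem_filter.1 (h he)).1
        refine ⟨fun e he => ?_, hAM⟩
        have := Finset.mem_filter.1 (h he)
        rw [hTdef]
        exact Finset.mem_powersetCard.2 ⟨this.2, hke e this.1⟩
      · rintro ⟨h1, h2⟩
        intro e he
        rw [Finset.mem_filter]
        exact ⟨h2 he, (Finset.mem_powersetCard.1 (h1 he)).1⟩
    have := Finset.prod_add (fun _ : Finset α => z - 1) (fun _ => (1:ℝ))
      (M.filter fun S => S ⊆ X)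
    simp only [Finset.prod_const, one_pow, mul_one, sub_add_cancel] at this
    rw [this, hps, Finset.sum_filter]
  rw [Finset.sum_congr rfl hexp, Finset.sum_comm]
  have hswap : ∀ A ∈ T.powerset,
      ∑ M ∈ matchingsOn k u V, (if A ⊆ M then (z - 1) ^ A.card else 0)
        = (z - 1) ^ A.card * (Cnt k u V A : ℝ) := by
    intro A _
    rw [← Finset.sum_filter, Finset.sum_const, nsmul_eq_mul, mul_comm]
    rfl
  rw [Finset.sum_congr rfl hswap]
  set N : ℝ := ((matchingsOn k u V).card : ℝ) with hNdef
  set q : ℝ := (u : ℝ) * (X.card : ℝ) ^ k / (V.card : ℝ) ^ k with hqdef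
  have hq : 0 ≤ q := by positivity
  have hgroup : ∑ A ∈ T.powerset, (z - 1) ^ A.card * (Cnt k u V A : ℝ)
      = ∑ j ∈ Finset.range (T.card + 1),
          (z - 1) ^ j * ∑ A ∈ T.powersetCard j, (Cnt k u V A : ℝ) := by
    rw [Finset.powerset_card_disjiUnion]
    refine (Finset.sum_disjiUnion _ _ _).trans ?_
    refine Finset.sum_congr rfl fun j _ => ?_
    rw [Finset.mul_sum]
    refine Finset.sum_congr rfl fun A hA => ?_
    rw [(Finset.mem_powersetCard.1 hA).2]
  rw [hgroup]
  have hN : 0 ≤ N := by positivity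
  have hSj : ∀ j : ℕ, ∑ A ∈ T.powersetCard j, (Cnt k u V A : ℝ)
      ≤ N * q ^ j / (j.factorial : ℝ) := by
    intro j
    have hfpos : (0:ℝ) < (j.factorial : ℝ) := by
      exact_mod_cast j.factorial_pos
    rw [le_div_iff₀ hfpos]
    exact sum_Cnt_bound hk hXV hn hku j
  calc ∑ j ∈ Finset.range (T.card + 1),
        (z - 1) ^ j * ∑ A ∈ T.powersetCard j, (Cnt k u V A : ℝ)
      ≤ ∑ j ∈ Finset.range (T.card + 1),
          (z - 1) ^ j * (N * q ^ j / (j.factorial : ℝ)) := by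
        refine Finset.sum_le_sum fun j _ => ?_
        exact mul_le_mul_of_nonneg_left (hSj j) (pow_nonneg hw j)
    _ = N * ∑ j ∈ Finset.range (T.card + 1), ((z - 1) * q) ^ j / (j.factorial : ℝ) := by
        rw [Finset.mul_sum]
        refine Finset.sum_congr rfl fun j _ => ?_
        rw [mul_pow]
        ring
    _ ≤ N * Real.exp ((z - 1) * q) := by
        apply mul_le_mul_of_nonneg_left _ hN
        exact Real.sum_le_exp_of_nonneg (mul_nonneg hw hq) _

end Stmt18

theorem stmt18 {α : Type*} [DecidableEq α] (k : ℕ) (hk : 2 ≤ k) (c₀ c₁ : ℝ)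
    (hc₀ : 0 < c₀) (hc₀' : c₀ ≤ 1 / (8 * Real.exp 1 ^ 2 * (k.factorial : ℝ)))
    (hc₁ : c₁ = 1 / (4 * (k.factorial : ℝ)))
    (n u m x : ℕ) (hn : 0 < n) (hu : 0 < u) (hm : 0 < m) (hx : 0 < x)
    (hku : k * u ≤ n) (hmu : ((m : ℝ) * u) ≤ c₀ * (n : ℝ) ^ k)
    (htm : Nat.ceil (c₁ * (x : ℝ) ^ k) ≤ m)
    (V : Finset α) (hV : V.card = n) (X : Finset α) (hX : X ⊆ V) (hXc : X.card = x) :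
    (Set.ncard {f : Fin m → Finset (Finset α) |
        (∀ i, f i ∈ matchingsOn k u V) ∧
        c₁ * (x : ℝ) ^ k <
          (((Finset.univ.biUnion f).filter fun S => S ⊆ X).card : ℝ)} : ℝ) /
      (((matchingsOn k u V).card : ℝ) ^ m) ≤
      Real.exp (-(c₁ * (x : ℝ) ^ k)) := by
  classical
  open Stmt18 in
  have hk0 : 0 < k := by omega
  have hkfac : (0:ℝ) < (k.factorial : ℝ) := by exact_mod_cast k.factorial_pos
  have he1 : (2:ℝ) ≤ Real.exp 1 := by
    have := Real.add_one_le_exp 1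
    linarith
  have he2 : (1:ℝ) ≤ Real.exp 1 ^ 2 := by nlinarith
  have hc₁pos : 0 < c₁ := by
    rw [hc₁]
    positivity
  have hxk : (0:ℝ) < (x:ℝ) ^ k := by
    have : (0:ℝ) < (x:ℝ) := by exact_mod_cast hx
    positivity
  have hnk : (0:ℝ) < (n:ℝ) ^ k := by
    have : (0:ℝ) < (n:ℝ) := by exact_mod_cast hn
    positivity
  set s : ℝ := c₁ * (x : ℝ) ^ k with hsdef
  have hs_pos : 0 < s := mul_pos hc₁pos hxk
  set t : ℕ := ⌈s⌉₊ with htdef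
  have hts : s ≤ (t : ℝ) := Nat.le_ceil s
  set Bad : Finset (Fin m → Finset (Finset α)) :=
    (Fintype.piFinset fun _ : Fin m => matchingsOn k u V).filter
      (fun f => s < (((Finset.univ.biUnion f).filter fun S => S ⊆ X).card : ℝ)) with hBaddef
  have hset : {f : Fin m → Finset (Finset α) |
      (∀ i, f i ∈ matchingsOn k u V) ∧
      c₁ * (x : ℝ) ^ k <
        (((Finset.univ.biUnion f).filter fun S => S ⊆ X).card : ℝ)} = ↑Bad := by
    ext f
    simp only [hBaddef, Set.mem_setOf_eq, Finset.coe_filter, Fintype.mem_piFinset, hsdef]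
  rw [hset, Set.ncard_coe_finset]
  by_cases hN0 : (matchingsOn k u V).card = 0
  · have hBad0 : Bad = ∅ := by
      rw [Finset.eq_empty_iff_forall_notMem]
      intro f hf
      rw [hBaddef, Finset.mem_filter, Fintype.mem_piFinset] at hf
      have h0 := hf.1 ⟨0, hm⟩
      rw [Finset.card_eq_zero.1 hN0] at h0
      exact absurd h0 (Finset.notMem_empty _)
    rw [hBad0, Finset.card_empty, hN0]
    norm_num
    exact (Real.exp_pos _).le
  have hNpos : (0:ℝ) < ((matchingsOn k u V).card : ℝ) := by
    exact_mod_cast Nat.pos_of_ne_zero hN0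
  set N : ℝ := ((matchingsOn k u V).card : ℝ) with hNdef
  set z : ℝ := 2 * Real.exp 1 ^ 2 with hzdef
  have hz1 : (1:ℝ) ≤ z := by nlinarith
  have hzpos : (0:ℝ) < z := by linarith
  set q : ℝ := (u : ℝ) * (x : ℝ) ^ k / (n : ℝ) ^ k with hqdef
  have hq : 0 ≤ q := by positivity
  -- the per-coordinate moment bound
  have hmgf : ∑ M ∈ matchingsOn k u V, z ^ ((M.filter fun S => S ⊆ X).card)
      ≤ N * Real.exp ((z - 1) * q) := by
    have := Stmt18.mgf_bound (k := k) (u := u) hk0 hX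
      (by rw [hV]; exact hn) (by rw [hV]; exact hku) hz1
    rwa [hV, hXc] at this
  have hmgf_nonneg : (0:ℝ) ≤ ∑ M ∈ matchingsOn k u V, z ^ ((M.filter fun S => S ⊆ X).card) :=
    Finset.sum_nonneg fun M _ => pow_nonneg (by linarith) _
  -- Chernoff-type counting bound
  have key : (Bad.card : ℝ) * z ^ t ≤ N ^ m * Real.exp ((m : ℝ) * ((z - 1) * q)) := by
    have step1 : (Bad.card : ℝ) * z ^ t
        ≤ ∑ f ∈ Fintype.piFinset (fun _ : Fin m => matchingsOn k u V),
            ∏ i : Fin m, z ^ (((f i).filter fun S => S ⊆ X).card) := by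
      have hconst : (Bad.card : ℝ) * z ^ t = ∑ _f ∈ Bad, (z ^ t : ℝ) := by
        rw [Finset.sum_const, nsmul_eq_mul]
      rw [hconst]
      have h1 : ∀ f ∈ Bad, (z ^ t : ℝ)
          ≤ ∏ i : Fin m, z ^ (((f i).filter fun S => S ⊆ X).card) := by
        intro f hf
        rw [hBaddef, Finset.mem_filter] at hf
        obtain ⟨-, hfY⟩ := hf
        have hYt : t ≤ ((Finset.univ.biUnion f).filter fun S => S ⊆ X).card :=
          Nat.ceil_le.2 hfY.le
        have hYsum : ((Finset.univ.biUnion f).filter fun S => S ⊆ X).card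
            ≤ ∑ i : Fin m, ((f i).filter fun S => S ⊆ X).card := by
          rw [Finset.filter_biUnion]
          exact Finset.card_biUnion_le
        calc (z ^ t : ℝ) ≤ z ^ (∑ i : Fin m, ((f i).filter fun S => S ⊆ X).card) :=
              pow_le_pow_right₀ hz1 (le_trans hYt hYsum)
          _ = ∏ i : Fin m, z ^ (((f i).filter fun S => S ⊆ X).card) :=
              (Finset.prod_pow_eq_pow_sum _ _ _).symm
      calc ∑ _f ∈ Bad, (z ^ t : ℝ)
          ≤ ∑ f ∈ Bad, ∏ i : Fin m, z ^ (((f i).filter fun S => S ⊆ X).card) :=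
            Finset.sum_le_sum h1
        _ ≤ ∑ f ∈ Fintype.piFinset (fun _ : Fin m => matchingsOn k u V),
              ∏ i : Fin m, z ^ (((f i).filter fun S => S ⊆ X).card) := by
            apply Finset.sum_le_sum_of_subset_of_nonneg (Finset.filter_subset _ _)
            intro f _ _
            exact Finset.prod_nonneg fun i _ => pow_nonneg (by linarith) _
    have step2 : ∑ f ∈ Fintype.piFinset (fun _ : Fin m => matchingsOn k u V),
          ∏ i : Fin m, z ^ (((f i).filter fun S => S ⊆ X).card)
        = (∑ M ∈ matchingsOn k u V, z ^ ((M.filter fun S => S ⊆ X).card)) ^ m := by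
      rw [← Finset.prod_univ_sum (fun _ : Fin m => matchingsOn k u V)
        (fun _ M => z ^ ((M.filter fun S => S ⊆ X).card)), Finset.prod_const,
        Finset.card_univ, Fintype.card_fin]
    calc (Bad.card : ℝ) * z ^ t
        ≤ (∑ M ∈ matchingsOn k u V, z ^ ((M.filter fun S => S ⊆ X).card)) ^ m := by
          rw [← step2]; exact step1
      _ ≤ (N * Real.exp ((z - 1) * q)) ^ m := pow_le_pow_left₀ hmgf_nonneg hmgf m
      _ = N ^ m * Real.exp ((m : ℝ) * ((z - 1) * q)) := by
          rw [mul_pow, Real.exp_nat_mul]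
  -- numeric conclusion
  have hmq : (m : ℝ) * q ≤ s / z := by
    have h1 : (m : ℝ) * ((u : ℝ) * (x : ℝ) ^ k) ≤ c₀ * (n : ℝ) ^ k * (x : ℝ) ^ k := by
      calc (m : ℝ) * ((u : ℝ) * (x : ℝ) ^ k) = ((m : ℝ) * u) * (x : ℝ) ^ k := by ring
        _ ≤ c₀ * (n : ℝ) ^ k * (x : ℝ) ^ k :=
          mul_le_mul_of_nonneg_right hmu hxk.le
    have h2 : (m : ℝ) * q ≤ c₀ * (x : ℝ) ^ k := by
      rw [hqdef, mul_div_assoc', div_le_iff₀ hnk]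
      calc (m : ℝ) * ((u : ℝ) * (x : ℝ) ^ k) ≤ c₀ * (n : ℝ) ^ k * (x : ℝ) ^ k := h1
        _ = c₀ * (x : ℝ) ^ k * (n : ℝ) ^ k := by ring
    have h3 : c₀ * (x : ℝ) ^ k ≤ s / z := by
      rw [hsdef, hzdef, hc₁]
      have hkey : c₀ ≤ 1 / (4 * (k.factorial:ℝ)) / (2 * Real.exp 1 ^ 2) := by
        have heq : 1 / (4 * (k.factorial:ℝ)) / (2 * Real.exp 1 ^ 2)
            = 1 / (8 * Real.exp 1 ^ 2 * (k.factorial:ℝ)) := by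
          rw [div_div]
          congr 1
          ring
        rw [heq]
        exact hc₀'
      calc c₀ * (x:ℝ)^k ≤ (1 / (4 * (k.factorial:ℝ)) / (2 * Real.exp 1 ^ 2)) * (x:ℝ)^k :=
            mul_le_mul_of_nonneg_right hkey hxk.le
        _ = 1 / (4 * (k.factorial:ℝ)) * (x:ℝ)^k / (2 * Real.exp 1 ^ 2) := by ring
    linarith
  have hexp_le : Real.exp ((m : ℝ) * ((z - 1) * q)) ≤ Real.exp s := by
    apply Real.exp_le_exp.2
    have hzq : (z - 1) * ((m:ℝ) * q) ≤ z * ((m:ℝ) * q) := by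
      apply mul_le_mul_of_nonneg_right _ (by positivity)
      linarith
    have : z * ((m:ℝ) * q) ≤ z * (s / z) := by
      apply mul_le_mul_of_nonneg_left hmq hzpos.le
    rw [mul_div_cancel₀ _ (ne_of_gt hzpos)] at this
    calc (m : ℝ) * ((z - 1) * q) = (z - 1) * ((m:ℝ) * q) := by ring
      _ ≤ z * ((m:ℝ) * q) := hzq
      _ ≤ s := this
  have hzt : Real.exp (2 * s) ≤ z ^ t := by
    calc Real.exp (2 * s) ≤ Real.exp (2 * (t:ℝ)) := by
          apply Real.exp_le_exp.2
          linarith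
      _ = (Real.exp 1 ^ 2) ^ t := by
          rw [← pow_mul, ← Real.exp_nat_mul]
          push_cast
          ring_nf
      _ ≤ z ^ t := by
          apply pow_le_pow_left₀ (by positivity)
          rw [hzdef]; linarith
  -- combine
  rw [div_le_iff₀ (by positivity : (0:ℝ) < N ^ m)]
  have hztpos : (0:ℝ) < z ^ t := pow_pos hzpos t
  have final : N ^ m * Real.exp ((m : ℝ) * ((z - 1) * q))
      ≤ Real.exp (-s) * N ^ m * z ^ t := by
    have h4 : Real.exp ((m : ℝ) * ((z - 1) * q)) ≤ Real.exp (-s) * z ^ t := by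
      calc Real.exp ((m : ℝ) * ((z - 1) * q)) ≤ Real.exp s := hexp_le
        _ = Real.exp (-s) * Real.exp (2 * s) := by
            rw [← Real.exp_add]
            ring_nf
        _ ≤ Real.exp (-s) * z ^ t := by
            apply mul_le_mul_of_nonneg_left hzt (Real.exp_pos _).le
    calc N ^ m * Real.exp ((m : ℝ) * ((z - 1) * q))
        ≤ N ^ m * (Real.exp (-s) * z ^ t) :=
          mul_le_mul_of_nonneg_left h4 (by positivity)
      _ = Real.exp (-s) * N ^ m * z ^ t := by ring
  have hchain : (Bad.card : ℝ) * z ^ t ≤ Real.exp (-s) * N ^ m * z ^ t :=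
    le_trans key final
  have := le_of_mul_le_mul_right hchain hztpos
  linarith
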